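/- Let p be a prime, n ≥ 1, and let 𝒢 be a finite subgroup of GL_n(𝔽_p) whose order is coprime to p. Then 𝒢 lifts to GL_n(ℤ_p): there exists a group homomorphism σ : 𝒢 → GL_n(ℤ_p) such that ρ ∘ σ is the inclusion of 𝒢 into GL_n(𝔽_p), where ρ : GL_n(ℤ_p) → GL_n(𝔽_p) is the reduction map induced by the canonical ring homomorphism ℤ_p → ℤ/pℤ applied entrywise. -/

import Mathlib

open Matrix

section RingAux

/-- In any ring, `(1 + p*C)^(p^m) ≡ 1 [p^(m+1)]`. -/
lemma one_add_p_mul_pow_prime_pow {R : Type*} [Ring R] {p : ℕ} (hp : p.Prime) (C : R) :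
    ∀ m : ℕ, ((p : R)) ^ (m + 1) ∣ (1 + (p : R) * C) ^ p ^ m - 1 := by
  intro m
  induction m with
  | zero => exact ⟨C, by simp⟩
  | succ m ih =>
    obtain ⟨D, hD⟩ := ih
    have hX : (1 + (p : R) * C) ^ p ^ m = 1 + (p : R) ^ (m + 1) * D := by
      have := sub_eq_iff_eq_add.mp hD
      rw [this, add_comm]
    have hpow : (1 + (p : R) * C) ^ p ^ (m + 1) = (1 + (p : R) ^ (m + 1) * D) ^ p := by
      rw [pow_succ, pow_mul, hX]
    set y : R := (p : R) ^ (m + 1) * D with hy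
    have hcomm : Commute (1 : R) y := Commute.one_left y
    have hbin := hcomm.add_pow_prime_eq hp
    rw [hpow, hbin]
    have h1 : (1 : R) ^ p = 1 := one_pow p
    rw [h1]
    have hyp : (p : R) ^ (m + 2) ∣ y ^ p := by
      have hc : Commute ((p : R) ^ (m + 1)) D := (Nat.cast_commute p D).pow_left _
      rw [hy, hc.mul_pow, ← pow_mul]
      exact Dvd.dvd.mul_right (pow_dvd_pow _ (by nlinarith [hp.two_le])) _
    have hsum : (p : R) ^ (m + 2) ∣
        (p : R) * ∑ k ∈ Finset.Ioo 0 p, 1 ^ k * y ^ (p - k) * ((p.choose k / p : ℕ) : R) := by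
      have : (p : R) ^ (m + 1) ∣
          ∑ k ∈ Finset.Ioo 0 p, 1 ^ k * y ^ (p - k) * ((p.choose k / p : ℕ) : R) := by
        refine Finset.dvd_sum fun k hk => ?_
        rw [Finset.mem_Ioo] at hk
        have hpk : p - k ≠ 0 := Nat.sub_ne_zero_of_lt hk.2
        have hyd : (p : R) ^ (m + 1) ∣ y := ⟨D, hy⟩
        obtain ⟨d, hd⟩ := dvd_pow hyd hpk
        exact ⟨d * ((p.choose k / p : ℕ) : R), by rw [hd, one_pow, one_mul, mul_assoc]⟩
      calc (p : R) ^ (m + 2) = (p : R) * (p : R) ^ (m + 1) := by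
            rw [← pow_succ']
        _ ∣ _ := mul_dvd_mul_left _ this
    have hsum' : (p : R) ^ (m + 2) ∣ (p : R) * 1 * y * ∑ k ∈ Finset.Ioo 0 p,
        1 ^ (k - 1) * y ^ (p - k - 1) * ((p.choose k / p : ℕ) : R) := by
      apply Dvd.dvd.mul_right
      rw [mul_one, hy, ← mul_assoc, ← pow_succ']
      exact dvd_mul_right _ _
    have : 1 + y ^ p + (p : R) * 1 * y * ∑ k ∈ Finset.Ioo 0 p,
        1 ^ (k - 1) * y ^ (p - k - 1) * ((p.choose k / p : ℕ) : R) - 1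
        = y ^ p + (p : R) * 1 * y * ∑ k ∈ Finset.Ioo 0 p,
        1 ^ (k - 1) * y ^ (p - k - 1) * ((p.choose k / p : ℕ) : R) := by abel
    rw [this]
    exact dvd_add hyp hsum'

end RingAux

section ZModAux

variable {p : ℕ} [hp : Fact p.Prime]

lemma zmod_exists_eq_p_mul {k : ℕ} (a : ZMod (p ^ (k + 1)))
    (ha : ZMod.castHom (dvd_pow_self p (Nat.succ_ne_zero k)) (ZMod p) a = 0) :
    ∃ b : ZMod (p ^ (k + 1)), a = (p : ZMod (p ^ (k + 1))) * b := by
  haveI : NeZero (p ^ (k + 1)) := ⟨pow_ne_zero _ hp.out.ne_zero⟩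
  have h1 : ((a.val : ℕ) : ZMod (p ^ (k + 1))) = a := ZMod.natCast_rightInverse a
  rw [← h1, map_natCast] at ha
  obtain ⟨c, hc⟩ := (ZMod.natCast_eq_zero_iff _ _).mp ha
  exact ⟨(c : ZMod (p ^ (k + 1))), by rw [← h1, hc, Nat.cast_mul]⟩

lemma zmod_isUnit_of_cast_isUnit {k : ℕ} (a : ZMod (p ^ (k + 1)))
    (ha : IsUnit (ZMod.castHom (dvd_pow_self p (Nat.succ_ne_zero k)) (ZMod p) a)) :
    IsUnit a := by
  haveI : NeZero (p ^ (k + 1)) := ⟨pow_ne_zero _ hp.out.ne_zero⟩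
  have h1 : ((a.val : ℕ) : ZMod (p ^ (k + 1))) = a := ZMod.natCast_rightInverse a
  rw [← h1, map_natCast] at ha
  rw [← h1, ZMod.isUnit_iff_coprime]
  exact Nat.Coprime.pow_right _ ((ZMod.isUnit_iff_coprime _ _).mp ha)

end ZModAux

section Level

variable {p : ℕ} [hp : Fact p.Prime] {n : ℕ}

lemma pow_eq_one_of_mem_ker (hn : 1 ≤ n) {k : ℕ} (g : GL (Fin n) (ZMod (p ^ (k + 1))))
    (hg : Matrix.GeneralLinearGroup.map
      (ZMod.castHom (dvd_pow_self p (Nat.succ_ne_zero k)) (ZMod p)) g = 1) :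
    g ^ (p ^ k) = 1 := by
  haveI : Nonempty (Fin n) := ⟨⟨0, hn⟩⟩
  set f := ZMod.castHom (dvd_pow_self p (Nat.succ_ne_zero k)) (ZMod p) with hf
  have hmap : ((g : Matrix (Fin n) (Fin n) (ZMod (p ^ (k + 1))))).map f = 1 := by
    have := congrArg Units.val hg
    simpa [Matrix.GeneralLinearGroup.map, RingHom.mapMatrix_apply] using this
  have hdvd : ∀ i j, ∃ b, ((g : Matrix (Fin n) (Fin n) (ZMod (p ^ (k + 1)))) - 1) i j
      = (p : ZMod (p ^ (k + 1))) * b := by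
    intro i j
    apply zmod_exists_eq_p_mul
    have h1 : f ((g : Matrix (Fin n) (Fin n) (ZMod (p ^ (k + 1)))) i j)
        = (1 : Matrix (Fin n) (Fin n) (ZMod p)) i j := by
      rw [← hmap]; simp [Matrix.map_apply]
    have h2 : f ((1 : Matrix (Fin n) (Fin n) (ZMod (p ^ (k + 1)))) i j)
        = (1 : Matrix (Fin n) (Fin n) (ZMod p)) i j := by
      by_cases hij : i = j <;> simp [Matrix.one_apply, hij]
    rw [Matrix.sub_apply, map_sub, h1, h2, sub_self]
  choose C hC using hdvd
  have hM : (g : Matrix (Fin n) (Fin n) (ZMod (p ^ (k + 1))))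
      = 1 + ((p : ℕ) : Matrix (Fin n) (Fin n) (ZMod (p ^ (k + 1)))) * Matrix.of C := by
    ext i j
    have h3 := hC i j
    rw [Matrix.sub_apply] at h3
    have h4 : (((p : ℕ) : Matrix (Fin n) (Fin n) (ZMod (p ^ (k + 1)))) * Matrix.of C) i j
        = (p : ZMod (p ^ (k + 1))) * C i j := by
      rw [← nsmul_eq_mul, Matrix.smul_apply, nsmul_eq_mul]
      rfl
    rw [Matrix.add_apply, h4]
    exact sub_eq_iff_eq_add'.mp h3
  obtain ⟨E, hE⟩ := one_add_p_mul_pow_prime_pow hp.out (Matrix.of C) k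
  rw [← hM] at hE
  have hzero : ((p : ℕ) : Matrix (Fin n) (Fin n) (ZMod (p ^ (k + 1)))) ^ (k + 1) = 0 := by
    rw [← Nat.cast_pow]
    exact CharP.cast_eq_zero _ _
  rw [hzero, zero_mul, sub_eq_zero] at hE
  ext
  push_cast
  rw [hE]

lemma glmap_surjective (k : ℕ) :
    Function.Surjective (Matrix.GeneralLinearGroup.map
      (ZMod.castHom (dvd_pow_self p (Nat.succ_ne_zero k)) (ZMod p)) :
        GL (Fin n) (ZMod (p ^ (k + 1))) →* GL (Fin n) (ZMod p)) := by
  haveI : NeZero p := ⟨hp.out.ne_zero⟩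
  intro M
  set f := ZMod.castHom (dvd_pow_self p (Nat.succ_ne_zero k)) (ZMod p) with hf
  set N : Matrix (Fin n) (Fin n) (ZMod (p ^ (k + 1)))
    := Matrix.of fun i j => (((M : Matrix (Fin n) (Fin n) (ZMod p)) i j).val :
        ZMod (p ^ (k + 1))) with hN
  have hmap : N.map f = (M : Matrix (Fin n) (Fin n) (ZMod p)) := by
    ext i j
    rw [Matrix.map_apply, hN]
    simp only [Matrix.of_apply]
    rw [map_natCast]
    exact ZMod.natCast_rightInverse _
  have hdet : IsUnit N.det := by
    apply zmod_isUnit_of_cast_isUnit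
    rw [RingHom.map_det, RingHom.mapMatrix_apply, hmap]
    exact (Matrix.isUnit_iff_isUnit_det _).mp M.isUnit
  obtain ⟨u, hu⟩ := (Matrix.isUnit_iff_isUnit_det N).mpr hdet
  refine ⟨u, Units.ext ?_⟩
  show (u : Matrix (Fin n) (Fin n) (ZMod (p ^ (k + 1)))).map f = _
  rw [hu, hmap]

end Level

section SZ

/-- Schur–Zassenhaus lifting: if `f : Γ →* Δ` is surjective with `Γ` finite and
`ker f` a `p`-group, any subgroup `G ≤ Δ` of order prime to `p` admits a section. -/
lemma exists_section_of_isPGroup_ker {p : ℕ} [hp : Fact p.Prime]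
    {Γ Δ : Type*} [Group Γ] [Group Δ] [Finite Γ] (f : Γ →* Δ)
    (hf : Function.Surjective f) (hker : IsPGroup p f.ker)
    (G : Subgroup Δ) (hG : Nat.Coprime (Nat.card G) p) :
    ∃ σ : G →* Γ, ∀ x : G, f (σ x) = x := by
  set H : Subgroup Γ := G.comap f with hH
  set φ : H →* Δ := f.domRestrict H with hφ
  set N : Subgroup H := f.ker.subgroupOf H with hNdef
  haveI : N.Normal := Subgroup.normal_subgroupOf
  have hN : IsPGroup p N := hker.comap_of_injective H.subtype Subtype.coe_injective
  obtain ⟨m, hm⟩ := (IsPGroup.iff_card (p := p)).mp hN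
  have hrange : φ.range = G := by
    rw [hφ, MonoidHom.restrict_range, Subgroup.map_comap_eq_self_of_surjective hf]
  have hNidx : N.index = Nat.card G := by
    have h1 : φ.ker = N := f.ker_restrict H
    rw [← h1, Subgroup.index_ker, hrange]
  have hcop : Nat.Coprime (Nat.card N) N.index := by
    rw [hm, hNidx]
    exact Nat.Coprime.pow_left m hG.symm
  obtain ⟨K, hK⟩ := Subgroup.exists_right_complement'_of_coprime hcop
  -- the homomorphism from `K` to `G`
  have hmemG : ∀ x : K, φ (x : H) ∈ G := fun x => Subgroup.mem_comap.mp (x : H).2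
  set ψ : K →* G := (φ.comp K.subtype).codRestrict G (fun x => hmemG x) with hψdef
  have hψval : ∀ x : K, (ψ x : Δ) = φ (x : H) := fun x => rfl
  have hinj : Function.Injective ψ := by
    rw [injective_iff_map_eq_one]
    intro a ha
    have h1 : φ (a : H) = 1 := by
      rw [← hψval a, ha]; rfl
    have h2 : (a : H) ∈ N := by
      have h2' : (a : H) ∈ (f.domRestrict H).ker := h1
      rw [f.ker_restrict H] at h2'
      exact h2'
    have h3 : (a : H) ∈ N ⊓ K := ⟨h2, a.2⟩
    rw [disjoint_iff.mp hK.disjoint, Subgroup.mem_bot] at h3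
    exact Subtype.ext h3
  have hsurj : Function.Surjective ψ := by
    intro g
    obtain ⟨γ, hγ⟩ := hf g
    have hγH : γ ∈ H := Subgroup.mem_comap.mpr (by rw [hγ]; exact g.2)
    obtain ⟨⟨ν, κ⟩, hprod, -⟩ := hK.existsUnique (⟨γ, hγH⟩ : H)
    refine ⟨κ, Subtype.ext ?_⟩
    show φ ((κ : ↥H)) = (g : Δ)
    have hν : φ ((ν : H)) = 1 := by
      have h0 : (ν : H) ∈ (f.domRestrict H).ker := by
        rw [f.ker_restrict H]
        exact ν.2
      exact h0
    have h4 : φ ((ν : H) * (κ : H)) = (g : Δ) := by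
      rw [hprod]
      exact hγ
    rw [_root_.map_mul, hν, one_mul] at h4
    exact h4
  set e : K ≃* G := MulEquiv.ofBijective ψ ⟨hinj, hsurj⟩ with he
  refine ⟨(H.subtype.comp K.subtype).comp e.symm.toMonoidHom, fun x => ?_⟩
  have h5 : ψ (e.symm x) = x := e.apply_symm_apply x
  exact congrArg Subtype.val h5

end SZ

section LevelLift

variable {p : ℕ} [hp : Fact p.Prime] {n : ℕ}

lemma exists_level_lift (hn : 1 ≤ n) (G : Subgroup (GL (Fin n) (ZMod p)))
    (hcard : Nat.Coprime (Nat.card G) p) (k : ℕ) :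
    ∃ σ : G →* GL (Fin n) (ZMod (p ^ (k + 1))),
      ∀ x : G, Matrix.GeneralLinearGroup.map
        (ZMod.castHom (dvd_pow_self p (Nat.succ_ne_zero k)) (ZMod p)) (σ x)
        = (x : GL (Fin n) (ZMod p)) := by
  set f := (Matrix.GeneralLinearGroup.map
      (ZMod.castHom (dvd_pow_self p (Nat.succ_ne_zero k)) (ZMod p)) :
    GL (Fin n) (ZMod (p ^ (k + 1))) →* GL (Fin n) (ZMod p)) with hfdef
  have hker : IsPGroup p f.ker := by
    intro g
    refine ⟨k, ?_⟩
    have h1 : (g : GL (Fin n) (ZMod (p ^ (k + 1)))) ^ (p ^ k) = 1 :=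
      pow_eq_one_of_mem_ker hn _ g.2
    exact Subtype.ext (by rw [SubmonoidClass.coe_pow, h1, OneMemClass.coe_one])
  obtain ⟨σ, hσ⟩ := exists_section_of_isPGroup_ker f (glmap_surjective k) hker G hcard
  exact ⟨σ, hσ⟩

end LevelLift

section Limit

variable {p : ℕ} [hp : Fact p.Prime]

lemma exists_padic_of_compat (x : ∀ k : ℕ, ZMod (p ^ (k + 1)))
    (hx : ∀ (j k : ℕ) (h : j ≤ k),
      ZMod.castHom (pow_dvd_pow p (Nat.succ_le_succ h)) (ZMod (p ^ (j + 1))) (x k) = x j) :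
    ∃ y : ℤ_[p], ∀ k, PadicInt.toZModPow (k + 1) y = x k := by
  haveI : ∀ k : ℕ, NeZero (p ^ (k + 1)) := fun k => ⟨pow_ne_zero _ hp.out.ne_zero⟩
  set S : ℕ → Set ℤ_[p] := fun k => {y | PadicInt.toZModPow (k + 1) y = x k} with hS
  have hmem : ∀ (k : ℕ) (y : ℤ_[p]), y ∈ S k ↔ PadicInt.toZModPow (k + 1) y = x k :=
    fun _ _ => Iff.rfl
  have hanti : ∀ j k, j ≤ k → S k ⊆ S j := by
    intro j k h y hy
    have hcast : ZMod.castHom (pow_dvd_pow p (Nat.succ_le_succ h)) (ZMod (p ^ (j + 1)))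
        (PadicInt.toZModPow (k + 1) y) = PadicInt.toZModPow (j + 1) y := by
      rw [← PadicInt.zmod_cast_comp_toZModPow (j + 1) (k + 1) (Nat.succ_le_succ h)]
      rfl
    rw [hmem] at hy ⊢
    rw [← hcast, hy, hx j k h]
  have hnat : ∀ k : ℕ, PadicInt.toZModPow (k + 1) (((x k).val : ℕ) : ℤ_[p]) = x k := by
    intro k
    rw [map_natCast]
    exact ZMod.natCast_rightInverse (x k)
  have hball : ∀ k, S k = Metric.closedBall (((x k).val : ℕ) : ℤ_[p])
      ((p : ℝ) ^ (-((k : ℤ) + 1))) := by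
    intro k
    ext y
    rw [hmem, Metric.mem_closedBall, dist_eq_norm]
    have hexp : (-((k : ℤ) + 1)) = -((k + 1 : ℕ) : ℤ) := by push_cast; ring
    rw [hexp, PadicInt.norm_le_pow_iff_mem_span_pow, ← PadicInt.ker_toZModPow,
      RingHom.mem_ker, map_sub, hnat k, sub_eq_zero]
  obtain ⟨y, hy⟩ := IsCompact.nonempty_iInter_of_directed_nonempty_isCompact_isClosed S
    (fun j k => ⟨max j k, hanti j _ (le_max_left _ _), hanti k _ (le_max_right _ _)⟩)
    (fun k => ⟨(((x k).val : ℕ) : ℤ_[p]), (hmem _ _).mpr (hnat k)⟩)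
    (fun k => by rw [hball]; exact isCompact_closedBall _ _)
    (fun k => by rw [hball]; exact Metric.isClosed_closedBall)
  exact ⟨y, fun k => (Set.mem_iInter.mp hy k : _)⟩

/-- relating `toZMod` with `toZModPow 1` -/
lemma castHom_toZModPow_one_eq_toZMod (x : ℤ_[p]) :
    ZMod.castHom (dvd_pow_self p (Nat.succ_ne_zero 0)) (ZMod p)
      (PadicInt.toZModPow 1 x) = PadicInt.toZMod x := by
  have h1 : PadicInt.toZModPow 1 x = ((x.appr 1 : ℕ) : ZMod (p ^ 1)) := rfl
  have h2 : PadicInt.toZMod x = ((x.zmodRepr : ℕ) : ZMod p) := rfl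
  rw [h1, h2, map_natCast]
  apply PadicInt.zmod_congr_of_sub_mem_max_ideal x
  · rw [PadicInt.maximalIdeal_eq_span_p]
    have := x.appr_spec 1
    rwa [pow_one] at this
  · exact x.sub_zmodRepr_mem

end Limit

section Main

open CategoryTheory Opposite

/-- Let `p` be a prime, `n ≥ 1`, and let `𝒢 ⊆ GL_n(𝔽_p)` be a (finite)
subgroup whose order is coprime to `p`.  Then `𝒢` lifts to `GL_n(ℤ_p)`:
there is a group homomorphism `σ : 𝒢 → GL_n(ℤ_p)` whose composition with the
entrywise reduction map `GL_n(ℤ_p) → GL_n(𝔽_p)` is the inclusion of `𝒢`. -/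
theorem lift_prime_to_p_subgroup_of_GLn (p : ℕ) [Fact p.Prime]
    (n : ℕ) (hn : 1 ≤ n) (G : Subgroup (GL (Fin n) (ZMod p)))
    (hcard : Nat.Coprime (Nat.card G) p) :
    ∃ σ : G →* GL (Fin n) ℤ_[p],
      ∀ x : G,
        Matrix.GeneralLinearGroup.map (PadicInt.toZMod : ℤ_[p] →+* ZMod p)
          (σ x) = (x : GL (Fin n) (ZMod p)) := by
  classical
  -- the inverse system of lifts at finite levels
  let X : ℕ → Type _ := fun k => {σ : G →* GL (Fin n) (ZMod (p ^ (k + 1))) //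
    ∀ x : G, Matrix.GeneralLinearGroup.map
      (ZMod.castHom (dvd_pow_self p (Nat.succ_ne_zero k)) (ZMod p)) (σ x)
      = (x : GL (Fin n) (ZMod p))}
  have tr_prop : ∀ {j k : ℕ} (h : j ≤ k) (σ : X k) (x : G),
      Matrix.GeneralLinearGroup.map
        (ZMod.castHom (dvd_pow_self p (Nat.succ_ne_zero j)) (ZMod p))
        ((Matrix.GeneralLinearGroup.map
          (ZMod.castHom (pow_dvd_pow p (Nat.succ_le_succ h)) (ZMod (p ^ (j + 1))))).comp σ.1 x)
      = (x : GL (Fin n) (ZMod p)) := by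
    intro j k h σ x
    rw [MonoidHom.comp_apply, ← Matrix.GeneralLinearGroup.map_comp_apply,
      ← Matrix.GeneralLinearGroup.map_comp, ZMod.castHom_comp]
    exact σ.2 x
  let tr : ∀ {j k : ℕ}, j ≤ k → X k → X j := fun {j k} h σ =>
    ⟨(Matrix.GeneralLinearGroup.map
      (ZMod.castHom (pow_dvd_pow p (Nat.succ_le_succ h)) (ZMod (p ^ (j + 1))))).comp σ.1,
      tr_prop h σ⟩
  let F : ℕᵒᵖ ⥤ Type _ :=
    { obj := fun k => X k.unop
      map := fun {a b} h => TypeCat.ofHom (fun σ => tr (leOfHom h.unop) σ)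
      map_id := by
        intro a
        refine ConcreteCategory.hom_ext _ _ fun σ => ?_
        apply Subtype.ext
        show (Matrix.GeneralLinearGroup.map
          (ZMod.castHom _ (ZMod (p ^ (a.unop + 1))))).comp σ.1 = σ.1
        have hch : ZMod.castHom (pow_dvd_pow p (Nat.succ_le_succ (leOfHom (𝟙 a).unop)))
            (ZMod (p ^ (a.unop + 1))) = RingHom.id _ := ZMod.castHom_self
        rw [hch, Matrix.GeneralLinearGroup.map_id, MonoidHom.id_comp]
      map_comp := by
        intro a b c hab hbc
        refine ConcreteCategory.hom_ext _ _ fun σ => ?_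
        apply Subtype.ext
        show (Matrix.GeneralLinearGroup.map _).comp σ.1
          = (Matrix.GeneralLinearGroup.map _).comp ((Matrix.GeneralLinearGroup.map _).comp σ.1)
        rw [← MonoidHom.comp_assoc, ← Matrix.GeneralLinearGroup.map_comp, ZMod.castHom_comp] }
  haveI : ∀ j : ℕᵒᵖ, Finite (F.obj j) := by
    intro j
    haveI : Finite (G →* GL (Fin n) (ZMod (p ^ (j.unop + 1)))) :=
      Finite.of_injective (fun f => (f : G → GL (Fin n) (ZMod (p ^ (j.unop + 1)))))
        DFunLike.coe_injective
    exact Subtype.finite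
  haveI : ∀ j : ℕᵒᵖ, Nonempty (F.obj j) := by
    intro j
    obtain ⟨σ, hσ⟩ := exists_level_lift hn G hcard j.unop
    exact ⟨⟨σ, hσ⟩⟩
  obtain ⟨s, hs⟩ := nonempty_sections_of_finite_inverse_system F
  set σs : ∀ k : ℕ, G →* GL (Fin n) (ZMod (p ^ (k + 1))) := fun k => (s (op k)).1 with hσs
  have hcompat : ∀ (j k : ℕ) (h : j ≤ k) (g : G),
      Matrix.GeneralLinearGroup.map
        (ZMod.castHom (pow_dvd_pow p (Nat.succ_le_succ h)) (ZMod (p ^ (j + 1))))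
        (σs k g) = σs j g := by
    intro j k h g
    have := hs ((homOfLE h).op : op k ⟶ op j)
    exact DFunLike.congr_fun (congrArg Subtype.val this) g
  -- build the p-adic matrices
  have hBex : ∀ g : G, ∃ B : Matrix (Fin n) (Fin n) ℤ_[p],
      ∀ k, B.map (PadicInt.toZModPow (k + 1))
        = ((σs k g : GL (Fin n) (ZMod (p ^ (k + 1)))) : Matrix (Fin n) (Fin n) (ZMod (p ^ (k + 1)))) := by
    intro g
    have hent : ∀ i j : Fin n, ∃ y : ℤ_[p], ∀ k,
        PadicInt.toZModPow (k + 1) y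
          = ((σs k g : GL (Fin n) (ZMod (p ^ (k + 1)))) :
              Matrix (Fin n) (Fin n) (ZMod (p ^ (k + 1)))) i j := by
      intro i j
      apply exists_padic_of_compat
      intro a b h
      have := hcompat a b h g
      have h2 := congrArg (fun u => ((u : GL (Fin n) (ZMod (p ^ (a + 1)))) :
        Matrix (Fin n) (Fin n) (ZMod (p ^ (a + 1)))) i j) this
      simpa [Matrix.GeneralLinearGroup.map, RingHom.mapMatrix_apply, Matrix.map_apply] using h2
    choose y hy using hent
    exact ⟨Matrix.of y, fun k => by ext i j; exact hy i j k⟩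
  choose B hB using hBex
  -- injectivity from all reductions
  have hext : ∀ M N : Matrix (Fin n) (Fin n) ℤ_[p],
      (∀ k, M.map (PadicInt.toZModPow (k + 1)) = N.map (PadicInt.toZModPow (k + 1))) → M = N := by
    intro M N h
    ext i j
    rw [← PadicInt.ext_of_toZModPow]
    intro m
    cases m with
    | zero =>
      have h0 : ∀ x y : ZMod (p ^ 0), x = y := by
        rw [pow_zero]
        exact fun x y => Subsingleton.elim x y
      exact h0 _ _
    | succ k =>
      have := congrFun (congrFun (h k) i) j
      simpa [Matrix.map_apply] using this
  have hBmul : ∀ g h : G, B (g * h) = B g * B h := by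
    intro g h
    apply hext
    intro k
    have h1 : (B g * B h).map (PadicInt.toZModPow (k + 1))
        = ((σs k (g * h) : GL (Fin n) (ZMod (p ^ (k + 1)))) :
            Matrix (Fin n) (Fin n) (ZMod (p ^ (k + 1)))) := by
      rw [Matrix.map_mul, hB, hB, ← Units.val_mul, ← _root_.map_mul]
    rw [hB, h1]
  have hBone : B 1 = 1 := by
    apply hext
    intro k
    rw [hB, _root_.map_one]
    simp [Matrix.map_one]
  have hBinv : ∀ g : G, B g * B g⁻¹ = 1 ∧ B g⁻¹ * B g = 1 := by
    intro g
    constructor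
    · rw [← hBmul, mul_inv_cancel, hBone]
    · rw [← hBmul, inv_mul_cancel, hBone]
  let σfin : G →* GL (Fin n) ℤ_[p] :=
    { toFun := fun g => ⟨B g, B g⁻¹, (hBinv g).1, (hBinv g).2⟩
      map_one' := Units.ext (by simpa using hBone)
      map_mul' := fun g h => Units.ext (by simpa using hBmul g h) }
  refine ⟨σfin, fun x => ?_⟩
  apply Units.ext
  show (B x).map PadicInt.toZMod = ((x : GL (Fin n) (ZMod p)) : Matrix (Fin n) (Fin n) (ZMod p))
  have h0 := hB x 0
  have hprop := (s (op 0)).2 x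
  have hval := congrArg (fun u : GL (Fin n) (ZMod p) =>
    (u : Matrix (Fin n) (Fin n) (ZMod p))) hprop
  ext i j
  have he1 : PadicInt.toZMod (B x i j)
      = ZMod.castHom (dvd_pow_self p (Nat.succ_ne_zero 0)) (ZMod p)
        (PadicInt.toZModPow 1 (B x i j)) := (castHom_toZModPow_one_eq_toZMod _).symm
  have he2 : PadicInt.toZModPow 1 (B x i j)
      = ((σs 0 x : GL (Fin n) (ZMod (p ^ 1))) : Matrix (Fin n) (Fin n) (ZMod (p ^ 1))) i j := by
    have := congrFun (congrFun h0 i) j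
    simpa [Matrix.map_apply] using this
  have he3 := congrFun (congrFun hval i) j
  simp only [Matrix.map_apply]
  rw [he1, he2]
  simpa [Matrix.GeneralLinearGroup.map, RingHom.mapMatrix_apply, Matrix.map_apply] using he3


end Main
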